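/- In the web model, let U ⊆ ℂ be open, ω̂ ∈ U, λ : U → ℂ differentiable at ω̂ with λ(ω̂) ∈ ℝ, and let ξ : 𝒜 × U → ℂ be such that for each ω ∈ U the function ξ(·,ω) satisfies Lξ(·,ω) = λ(ω)·ξ(·,ω), and each ξ(α,·) is differentiable at ω̂. Let η : 𝒜 → ℂ satisfy Lη = λ(ω̂)·η. Then λ̇(ω̂)·∑_{α ∈ 𝒜₁} ξ(α,ω̂)·η̄(α) = ∑_{σ ∈ 𝒞} 𝔟_σ(0)·{ξ̇(·,ω̂), η̄}_σ(0), where ξ̇(α,ω̂) denotes the ω-derivative of ξ(α,·) at ω̂, η̄ is the complex conjugate of η, and {ξ,η}_σ(0) = ξ(σ(0))η(σ(1)) − ξ(σ(1))η(σ(0)). In particular, taking η = ξ(·,ω̂), one has λ̇(ω̂)·∑_{α ∈ 𝒜₁} |ξ(α,ω̂)|² = ∑_{σ ∈ 𝒞} 𝔟_σ(0)·{ξ̇(·,ω̂), ξ̄(·,ω̂)}_σ(0). -/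

import Mathlib

open Complex

/-- Points of the web: the central part `A1` plus, for each channel `σ ∈ C`, the chain
`σ(1), σ(2), …` (encoded as `Sum.inr (σ, k)` for `σ(k+1)`). -/
abbrev WebPoint (C A1 : Type*) := A1 ⊕ C × ℕ

/-- `webPt γ σ k` is the particle `σ(k)`; `σ(0)` is the attachment point `γ σ ∈ A1`. -/
def webPt {C A1 : Type*} (γ : C → A1) (σ : C) : ℕ → WebPoint C A1
  | 0 => Sum.inl (γ σ)
  | k + 1 => Sum.inr (σ, k)

/-- `ξ` satisfies the eigenvalue equation `Lξ = λξ` (rows of `L` have finite support,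
so the `finsum` is a genuine finite sum). -/
def IsWebEigen {C A1 : Type*} (L : WebPoint C A1 → WebPoint C A1 → ℝ) (lam : ℂ)
    (ξ : WebPoint C A1 → ℂ) : Prop :=
  ∀ α, ∑ᶠ β, (L α β : ℂ) * ξ β = lam * ξ α

theorem web_energy_identity
    {C A1 : Type*} [Fintype C] [Nonempty C] [Fintype A1]
    (γ : C → A1) (hγ : Function.Injective γ)
    (𝔞 𝔟 : C → ℕ → ℝ) (h𝔟 : ∀ σ k, 0 < 𝔟 σ k)
    (L : WebPoint C A1 → WebPoint C A1 → ℝ)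
    (hsym : ∀ α β, L α β = L β α)
    (hdiag : ∀ σ k, L (webPt γ σ (k + 1)) (webPt γ σ (k + 1)) = 𝔞 σ (k + 1))
    (hoff : ∀ σ k, L (webPt γ σ k) (webPt γ σ (k + 1)) = -(𝔟 σ k))
    (hzero : ∀ σ (k : ℕ) (β : WebPoint C A1), β ≠ webPt γ σ k → β ≠ webPt γ σ (k + 1) →
      β ≠ webPt γ σ (k + 2) → L (webPt γ σ (k + 1)) β = 0)
    (U : Set ℂ) (hU : IsOpen U) (ω₀ : ℂ) (hω₀ : ω₀ ∈ U)
    (lam : ℂ → ℂ) (lam' : ℂ) (hlam' : HasDerivAt lam lam' ω₀)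
    (hlamreal : (lam ω₀).im = 0)
    (ξ : WebPoint C A1 → ℂ → ℂ)
    (hξ : ∀ ω ∈ U, IsWebEigen L (lam ω) (fun α => ξ α ω))
    (ξ' : WebPoint C A1 → ℂ) (hξ' : ∀ α, HasDerivAt (ξ α) (ξ' α) ω₀)
    (η : WebPoint C A1 → ℂ) (hη : IsWebEigen L (lam ω₀) η) :
    lam' * ∑ α : A1, ξ (Sum.inl α) ω₀ * (starRingEnd ℂ) (η (Sum.inl α))
      = ∑ σ : C, (𝔟 σ 0 : ℂ) *
          (ξ' (webPt γ σ 0) * (starRingEnd ℂ) (η (webPt γ σ 1))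
            - ξ' (webPt γ σ 1) * (starRingEnd ℂ) (η (webPt γ σ 0)))
    ∧
    lam' * ∑ α : A1, ((‖ξ (Sum.inl α) ω₀‖ : ℝ) : ℂ) ^ 2
      = ∑ σ : C, (𝔟 σ 0 : ℂ) *
          (ξ' (webPt γ σ 0) * (starRingEnd ℂ) (ξ (webPt γ σ 1) ω₀)
            - ξ' (webPt γ σ 1) * (starRingEnd ℂ) (ξ (webPt γ σ 0) ω₀)) := by
    classical
  set c := (starRingEnd ℂ) with hc
  -- a finite set containing the support of every central row of `L`
  set T : Finset (WebPoint C A1) :=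
    Finset.univ.image (Sum.inl : A1 → WebPoint C A1) ∪
    Finset.univ.image (fun σ : C => (Sum.inr (σ, 0) : WebPoint C A1)) with hT
  have hmemT : ∀ β : WebPoint C A1, β ∉ T → ∃ σ k, β = Sum.inr (σ, k + 1) := by
    intro β hβ
    match β with
    | Sum.inl a => exact absurd (by simp [hT]) hβ
    | Sum.inr (σ, 0) => exact absurd (by simp [hT]) hβ
    | Sum.inr (σ, k + 1) => exact ⟨σ, k, rfl⟩
  have hLrow : ∀ (a : A1) (β : WebPoint C A1), β ∉ T → L (Sum.inl a) β = 0 := by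
    intro a β hβ
    obtain ⟨σ, k, rfl⟩ := hmemT β hβ
    rw [hsym]
    exact hzero σ (k + 1) (Sum.inl a) (by simp [webPt]) (by simp [webPt]) (by simp [webPt])
  have hsupp : ∀ (a : A1) (f : WebPoint C A1 → ℂ),
      ∑ᶠ β, (L (Sum.inl a) β : ℂ) * f β = ∑ β ∈ T, (L (Sum.inl a) β : ℂ) * f β := by
    intro a f
    apply finsum_eq_finset_sum_of_support_subset
    intro β hβ
    by_contra hβT
    exact hβ (by simp [hLrow a β hβT])
  -- the derivative of the eigen-equation at the central sites
  have hD : ∀ a : A1, ∑ β ∈ T, (L (Sum.inl a) β : ℂ) * ξ' β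
      = lam' * ξ (Sum.inl a) ω₀ + lam ω₀ * ξ' (Sum.inl a) := by
    intro a
    have h1 : HasDerivAt (fun ω => ∑ β ∈ T, (L (Sum.inl a) β : ℂ) * ξ β ω)
        (∑ β ∈ T, (L (Sum.inl a) β : ℂ) * ξ' β) ω₀ :=
      HasDerivAt.fun_sum fun β _ => (hξ' β).const_mul _
    have h2 : HasDerivAt (fun ω => lam ω * ξ (Sum.inl a) ω)
        (lam' * ξ (Sum.inl a) ω₀ + lam ω₀ * ξ' (Sum.inl a)) ω₀ :=
      hlam'.mul (hξ' (Sum.inl a))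
    have heq : (fun ω => ∑ β ∈ T, (L (Sum.inl a) β : ℂ) * ξ β ω)
        =ᶠ[nhds ω₀] fun ω => lam ω * ξ (Sum.inl a) ω := by
      filter_upwards [hU.mem_nhds hω₀] with ω hω
      rw [← hsupp a (fun β => ξ β ω)]
      exact hξ ω hω (Sum.inl a)
    exact h1.unique (h2.congr_of_eventuallyEq heq)
  -- the value of `L` between a central point and the first channel point
  have hLcross : ∀ (a : A1) (σ : C),
      L (Sum.inl a) (Sum.inr (σ, 0)) = if a = γ σ then -(𝔟 σ 0) else 0 := by
    intro a σ
    by_cases h : a = γ σ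
    · subst h
      simp only [if_pos rfl]
      have := hoff σ 0
      simpa [webPt] using this
    · rw [if_neg h, hsym]
      refine hzero σ 0 (Sum.inl a) ?_ (by simp [webPt]) (by simp [webPt])
      simp [webPt, h]
  have hconjL : ∀ α β, c ((L α β : ℂ)) = (L α β : ℂ) := fun α β => Complex.conj_ofReal _
  have hlamconj : c (lam ω₀) = lam ω₀ := Complex.conj_eq_iff_im.mpr hlamreal
  -- the main identity, for an arbitrary eigenfunction η at eigenvalue lam ω₀
  have main : ∀ η : WebPoint C A1 → ℂ, IsWebEigen L (lam ω₀) η →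
      lam' * ∑ a : A1, ξ (Sum.inl a) ω₀ * c (η (Sum.inl a))
        = ∑ σ : C, (𝔟 σ 0 : ℂ) *
            (ξ' (webPt γ σ 0) * c (η (webPt γ σ 1))
              - ξ' (webPt γ σ 1) * c (η (webPt γ σ 0))) := by
    intro η hη
    have hηT : ∀ a : A1, ∑ β ∈ T, (L (Sum.inl a) β : ℂ) * η β = lam ω₀ * η (Sum.inl a) :=
      fun a => (hsupp a η).symm.trans (hη (Sum.inl a))
    -- the Green-type bilinear sum
    set S : ℂ := ∑ a : A1,
        ((∑ β ∈ T, (L (Sum.inl a) β : ℂ) * ξ' β) * c (η (Sum.inl a))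
          - ξ' (Sum.inl a) * c (∑ β ∈ T, (L (Sum.inl a) β : ℂ) * η β)) with hS
    -- first computation of S
    have way1 : S = lam' * ∑ a : A1, ξ (Sum.inl a) ω₀ * c (η (Sum.inl a)) := by
      rw [hS, Finset.mul_sum]
      refine Finset.sum_congr rfl fun a _ => ?_
      rw [hD a, hηT a, map_mul, hlamconj]
      ring
    -- second computation of S: expand as a double sum
    have way2 : S = ∑ a : A1, ∑ β ∈ T, (L (Sum.inl a) β : ℂ) *
        (ξ' β * c (η (Sum.inl a)) - ξ' (Sum.inl a) * c (η β)) := by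
      rw [hS]
      refine Finset.sum_congr rfl fun a _ => ?_
      rw [map_sum, Finset.mul_sum, Finset.sum_mul, ← Finset.sum_sub_distrib]
      refine Finset.sum_congr rfl fun β _ => ?_
      rw [map_mul, hconjL]
      ring
    -- split the inner sum over T
    have hdisj : Disjoint (Finset.univ.image (Sum.inl : A1 → WebPoint C A1))
        (Finset.univ.image (fun σ : C => (Sum.inr (σ, 0) : WebPoint C A1))) := by
      simp [Finset.disjoint_left]
    have hsplit : ∀ g : WebPoint C A1 → ℂ, ∑ β ∈ T, g β
        = ∑ a' : A1, g (Sum.inl a') + ∑ σ : C, g (Sum.inr (σ, 0)) := by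
      intro g
      rw [hT, Finset.sum_union hdisj,
        Finset.sum_image (fun x _ y _ h => Sum.inl.inj h),
        Finset.sum_image (fun x _ y _ h => by
          simpa using h)]
    have way3 : S =
        (∑ a : A1, ∑ a' : A1, (L (Sum.inl a) (Sum.inl a') : ℂ) *
          (ξ' (Sum.inl a') * c (η (Sum.inl a)) - ξ' (Sum.inl a) * c (η (Sum.inl a'))))
        + ∑ a : A1, ∑ σ : C, (L (Sum.inl a) (Sum.inr (σ, 0)) : ℂ) *
          (ξ' (Sum.inr (σ, 0)) * c (η (Sum.inl a)) - ξ' (Sum.inl a) * c (η (Sum.inr (σ, 0)))) := by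
      rw [way2, ← Finset.sum_add_distrib]
      exact Finset.sum_congr rfl fun a _ => hsplit _
    -- the symmetric part vanishes
    have hanti : (∑ a : A1, ∑ a' : A1, (L (Sum.inl a) (Sum.inl a') : ℂ) *
        (ξ' (Sum.inl a') * c (η (Sum.inl a)) - ξ' (Sum.inl a) * c (η (Sum.inl a')))) = 0 := by
      set F : A1 → A1 → ℂ := fun a a' => (L (Sum.inl a) (Sum.inl a') : ℂ) *
        (ξ' (Sum.inl a') * c (η (Sum.inl a)) - ξ' (Sum.inl a) * c (η (Sum.inl a'))) with hF
      have hFanti : ∀ a a', F a a' = -F a' a := by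
        intro a a'
        have hs : (L (Sum.inl a) (Sum.inl a') : ℂ) = (L (Sum.inl a') (Sum.inl a) : ℂ) := by
          exact_mod_cast hsym (Sum.inl a) (Sum.inl a')
        rw [hF]
        simp only
        rw [hs]
        ring
      have h : (∑ a : A1, ∑ a' : A1, F a a') = -∑ a : A1, ∑ a' : A1, F a a' := by
        conv_lhs => rw [Finset.sum_comm]
        rw [← Finset.sum_neg_distrib]
        refine Finset.sum_congr rfl fun a' _ => ?_
        rw [← Finset.sum_neg_distrib]
        exact Finset.sum_congr rfl fun a _ => hFanti a a'
      linear_combination (1/2 : ℂ) * h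
    -- the cross part gives the Wronskians
    have hcross : (∑ a : A1, ∑ σ : C, (L (Sum.inl a) (Sum.inr (σ, 0)) : ℂ) *
        (ξ' (Sum.inr (σ, 0)) * c (η (Sum.inl a)) - ξ' (Sum.inl a) * c (η (Sum.inr (σ, 0)))))
        = ∑ σ : C, (𝔟 σ 0 : ℂ) *
            (ξ' (webPt γ σ 0) * c (η (webPt γ σ 1))
              - ξ' (webPt γ σ 1) * c (η (webPt γ σ 0))) := by
      rw [Finset.sum_comm]
      refine Finset.sum_congr rfl fun σ _ => ?_
      have : ∀ a : A1, (L (Sum.inl a) (Sum.inr (σ, 0)) : ℂ) *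
          (ξ' (Sum.inr (σ, 0)) * c (η (Sum.inl a)) - ξ' (Sum.inl a) * c (η (Sum.inr (σ, 0))))
          = if a = γ σ then (-(𝔟 σ 0) : ℂ) *
              (ξ' (Sum.inr (σ, 0)) * c (η (Sum.inl a)) - ξ' (Sum.inl a) * c (η (Sum.inr (σ, 0))))
            else 0 := by
        intro a
        rw [hLcross a σ]
        by_cases h : a = γ σ <;> simp [h]
      rw [Finset.sum_congr rfl fun a _ => this a, Finset.sum_ite_eq' Finset.univ (γ σ)]
      simp only [Finset.mem_univ, if_pos]
      show _ = (𝔟 σ 0 : ℂ) * (ξ' (Sum.inl (γ σ)) * c (η (Sum.inr (σ, 0)))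
        - ξ' (Sum.inr (σ, 0)) * c (η (Sum.inl (γ σ))))
      push_cast
      ring
    rw [← way1, way3, hanti, zero_add, hcross]
  refine ⟨main η hη, ?_⟩
  have h2 := main (fun α => ξ α ω₀) (hξ ω₀ hω₀)
  have habs : ∀ a : A1, ((‖ξ (Sum.inl a) ω₀‖ : ℝ) : ℂ) ^ 2
      = ξ (Sum.inl a) ω₀ * c (ξ (Sum.inl a) ω₀) := by
    intro a
    rw [Complex.mul_conj]
    norm_cast
    exact Complex.sq_norm _
  rw [Finset.sum_congr rfl fun a _ => habs a]
  exact h2
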